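/- Let A be a finite family of sets and B a finite set with ⋃A ⊆ B, let a be a positive integer, and suppose that for every nonempty proper subfamily S ⊊ A, the union ⋃_{q ∈ S} q̂ (where q̂ ⊇ q is an 'enlargement' of q) contains at least a·|S| elements of B, and |B| = a·|A|. Then in the bipartite graph Γ with parts A and B where q ∈ A is adjacent to v ∈ B iff v ∈ q̂, the vertices can be partitioned into |A| disjoint a-stars with centers in A. -/
import Mathlib


/-- **Star decomposition via enlargements.** Let `A` be a finite family (index
type) of cubes with enlargements `hat q ⊆ B` (`hat q ⊇ q`, and every element of
the finite set `B` lies in some enlargement), let `a ≥ 1`, and suppose that for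
every nonempty proper subfamily `S ⊊ A` we have `a·|S| ≤ |⋃_{q ∈ S} hat q|`,
and `|B| = a·|A|`. Then in the bipartite graph `Γ` where `q ∈ A` is adjacent to
`v ∈ B` iff `v ∈ hat q`, the vertices can be partitioned into `|A|` disjoint
`a`-stars with centers in `A` (encoded by `f : B → A` with `b ∈ hat (f b)` and
all fibers of size `a`). -/
theorem stmt_18 {A B : Type*} [Fintype A] [Fintype B] [DecidableEq A]
    [DecidableEq B] (hat : A → Finset B) (a : ℕ) (ha : 0 < a)
    (hcover : ∀ b : B, ∃ q : A, b ∈ hat q)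
    (hHall : ∀ S : Finset A, S.Nonempty → S ≠ Finset.univ →
      a * S.card ≤ (S.biUnion hat).card)
    (hcard : Fintype.card B = a * Fintype.card A) :
    ∃ f : B → A, (∀ b, b ∈ hat (f b)) ∧
      ∀ q : A, (Finset.univ.filter fun b => f b = q).card = a := by
  classical
  set t : B → Finset (A × Fin a) :=
    fun b => (Finset.univ.filter fun q => b ∈ hat q) ×ˢ Finset.univ with ht
  have hall : ∀ s : Finset B, s.card ≤ (s.biUnion t).card := by
    intro s
    rcases s.eq_empty_or_nonempty with rfl | hs
    · simp
    set Q : Finset A := s.biUnion fun b => Finset.univ.filter fun q => b ∈ hat q with hQ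
    have hbi : s.biUnion t = Q ×ˢ (Finset.univ : Finset (Fin a)) := by
      ext ⟨q, i⟩
      simp [ht, hQ, Finset.mem_biUnion]
    rw [hbi, Finset.card_product, Finset.card_univ, Fintype.card_fin]
    set S : Finset A := Qᶜ with hS
    have hQne : Q.Nonempty := by
      obtain ⟨b, hb⟩ := hs
      obtain ⟨q, hq⟩ := hcover b
      exact ⟨q, Finset.mem_biUnion.2 ⟨b, hb, by simp [hq]⟩⟩
    rcases eq_or_ne S ∅ with hSe | hSne
    · have hQu : Q = Finset.univ := by
        rwa [hS, Finset.compl_eq_empty_iff] at hSe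
      rw [hQu, Finset.card_univ]
      calc s.card ≤ Fintype.card B := Finset.card_le_univ s
        _ = a * Fintype.card A := hcard
        _ = Fintype.card A * a := Nat.mul_comm _ _
    · have hSuniv : S ≠ Finset.univ := by
        intro h
        obtain ⟨q, hq⟩ := hQne
        have : q ∈ S := h ▸ Finset.mem_univ q
        exact (Finset.mem_compl.1 this) hq
      have hkey := hHall S (Finset.nonempty_iff_ne_empty.2 hSne) hSuniv
      have hdisj : S.biUnion hat ⊆ sᶜ := by
        intro b hb
        rcases Finset.mem_biUnion.1 hb with ⟨q, hqS, hbq⟩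
        rw [Finset.mem_compl]
        intro hbs
        exact (Finset.mem_compl.1 hqS) (Finset.mem_biUnion.2 ⟨b, hbs, by simp [hbq]⟩)
      have h1 : a * S.card ≤ Fintype.card B - s.card := by
        calc a * S.card ≤ (S.biUnion hat).card := hkey
          _ ≤ sᶜ.card := Finset.card_le_card hdisj
          _ = Fintype.card B - s.card := by rw [Finset.card_compl]
      have hScard : a * S.card = a * Fintype.card A - a * Q.card := by
        rw [hS, Finset.card_compl, Nat.mul_sub]
      have hQle : a * Q.card ≤ a * Fintype.card A :=
        Nat.mul_le_mul_left a (Finset.card_le_univ Q)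
      have hsle : s.card ≤ Fintype.card B := Finset.card_le_univ s
      rw [hScard, hcard] at h1
      rw [hcard] at hsle
      rw [Nat.mul_comm]
      omega
  obtain ⟨g, hginj, hg⟩ := (Finset.all_card_le_biUnion_card_iff_exists_injective t).1 hall
  have hmem : ∀ b, b ∈ hat (g b).1 := by
    intro b
    have := hg b
    rw [ht, Finset.mem_product, Finset.mem_filter] at this
    exact this.1.2
  refine ⟨fun b => (g b).1, hmem, ?_⟩
  have hle : ∀ q : A, (Finset.univ.filter fun b => (g b).1 = q).card ≤ a := by
    intro q
    have : (Finset.univ.filter fun b => (g b).1 = q).card ≤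
        (Finset.univ : Finset (Fin a)).card := by
      apply Finset.card_le_card_of_injOn (fun b => (g b).2)
      · intro b _; exact Finset.mem_univ _
      · intro b hb c hc hbc
        apply hginj
        rw [Finset.mem_coe, Finset.mem_filter] at hb hc
        exact Prod.ext (hb.2.trans hc.2.symm) hbc
    simpa using this
  have hsum : ∑ q : A, (Finset.univ.filter fun b => (g b).1 = q).card = Fintype.card B := by
    rw [← Finset.card_univ (α := B)]
    exact (Finset.card_eq_sum_card_fiberwise (fun b _ => Finset.mem_univ ((g b).1))).symm
  intro q
  by_contra hne
  have hlt : (Finset.univ.filter fun b => (g b).1 = q).card < a :=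
    lt_of_le_of_ne (hle q) hne
  have : ∑ q : A, (Finset.univ.filter fun b => (g b).1 = q).card < ∑ _q : A, a :=
    Finset.sum_lt_sum (fun i _ => hle i) ⟨q, Finset.mem_univ q, hlt⟩
  rw [hsum, hcard, Finset.sum_const, Finset.card_univ, smul_eq_mul, Nat.mul_comm] at this
  exact lt_irrefl _ this
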